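/- Uniqueness step for the dissipative parabolic Crank–Nicolson scheme: if V ∈ S_h satisfies (1/k)(V,φ) = [(ε/k)V(1) + (δ/2)V(1)] φ(1) − (a/2) (V',φ') + (1/2)(β V,φ) for all φ ∈ S_h, with ε ≤ 0, a > 0, δ ∈ ℝ, β bounded, and k (‖β‖_∞ + δ²/a) < 2, then V = 0. -/

import Mathlib

open MeasureTheory intervalIntegral Set

/-- uniqueness step for the dissipative parabolic Crank–Nicolson scheme:
if `V ∈ S_h` (real finite element space, elements vanishing at 0) solves the homogeneous CN
equation with `ε ≤ 0`, `a > 0` and `k(‖β‖_∞ + δ²/a) < 2`, then `V = 0` (on `[0,1]`). -/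
theorem parabolic_CN_uniqueness
    (S : Submodule ℝ (ℝ → ℝ)) (hfin : FiniteDimensional ℝ S)
    (hS0 : ∀ φ ∈ S, φ 0 = 0)
    (k a δ ε M : ℝ) (hk : 0 < k) (ha : 0 < a) (hε : ε ≤ 0)
    (β : ℝ → ℝ) (hβ : ∀ x ∈ Set.Icc (0:ℝ) 1, |β x| ≤ M)
    (hsmall : k * (M + δ ^ 2 / a) < 2)
    (V : ℝ → ℝ) (hV : V ∈ S) (hVc : ContDiff ℝ 1 V)
    (heq : ∀ φ, φ ∈ S →
      (1 / k) * (∫ x in (0:ℝ)..1, V x * φ x) =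
        (ε / k + δ / 2) * V 1 * φ 1
          - (a / 2) * (∫ x in (0:ℝ)..1, deriv V x * deriv φ x)
          + (1 / 2) * (∫ x in (0:ℝ)..1, β x * V x * φ x)) :
    ∀ x ∈ Set.Icc (0:ℝ) 1, V x = 0 := by
  have hVcont : Continuous V := hVc.continuous
  have hV'cont : Continuous (deriv V) := hVc.continuous_deriv le_rfl
  have hV0 : V 0 = 0 := hS0 V hV
  have hE := heq V hV
  set I1 := ∫ x in (0:ℝ)..1, V x * V x with hI1def
  set I2 := ∫ x in (0:ℝ)..1, deriv V x * deriv V x with hI2def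
  set I3 := ∫ x in (0:ℝ)..1, β x * V x * V x with hI3def
  have hI1nn : 0 ≤ I1 :=
    intervalIntegral.integral_nonneg (by norm_num) (fun x _ => mul_self_nonneg _)
  have hI2nn : 0 ≤ I2 :=
    intervalIntegral.integral_nonneg (by norm_num) (fun x _ => mul_self_nonneg _)
  have hM : 0 ≤ M := le_trans (abs_nonneg _) (hβ 0 (by norm_num))
  -- FTC : ∫ 2 V V' = V(1)^2
  have hFTC : (∫ x in (0:ℝ)..1, 2 * V x * deriv V x) = V 1 * V 1 := by
    have h := intervalIntegral.integral_eq_sub_of_hasDerivAt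
      (f := fun y => V y * V y) (f' := fun x => 2 * V x * deriv V x)
      (a := (0:ℝ)) (b := 1)
      (fun x _ => by
        have hd := (hVc.differentiable one_ne_zero x).hasDerivAt
        have := hd.mul hd
        convert this using 1
        · rfl
        · rfl
        · ring)
      (((continuous_const.mul hVcont).mul hV'cont).intervalIntegrable 0 1)
    simpa [hV0] using h
  -- pointwise AM-GM bound integrated
  have hδbound : (∫ x in (0:ℝ)..1, δ * (V x * deriv V x)) ≤
      (a / 2) * I2 + (δ ^ 2 / (2 * a)) * I1 := by
    have hmono : (∫ x in (0:ℝ)..1, δ * (V x * deriv V x)) ≤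
        ∫ x in (0:ℝ)..1, (a / 2) * (deriv V x * deriv V x)
          + (δ ^ 2 / (2 * a)) * (V x * V x) := by
      apply intervalIntegral.integral_mono_on (by norm_num)
      · exact (continuous_const.mul (hVcont.mul hV'cont)).intervalIntegrable 0 1
      · exact ((continuous_const.mul (hV'cont.mul hV'cont)).add
          (continuous_const.mul (hVcont.mul hVcont))).intervalIntegrable 0 1
      · intro x _
        have h := sq_nonneg (Real.sqrt a * deriv V x - (δ / Real.sqrt a) * V x)
        have hsa : Real.sqrt a * Real.sqrt a = a := Real.mul_self_sqrt ha.le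
        have hsapos : 0 < Real.sqrt a := Real.sqrt_pos.mpr ha
        have h2a : (0:ℝ) < 2 * a := by positivity
        rw [← mul_le_mul_iff_right₀ h2a]
        have hrw : 2 * a * ((a / 2) * (deriv V x * deriv V x)
            + (δ ^ 2 / (2 * a)) * (V x * V x))
            = a * a * (deriv V x * deriv V x) + δ ^ 2 * (V x * V x) := by
          field_simp
        rw [hrw]
        nlinarith [sq_nonneg (a * deriv V x - δ * V x)]
    have hsplit : (∫ x in (0:ℝ)..1, (a / 2) * (deriv V x * deriv V x)
          + (δ ^ 2 / (2 * a)) * (V x * V x)) = (a / 2) * I2 + (δ ^ 2 / (2 * a)) * I1 := by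
      rw [intervalIntegral.integral_add (f := fun x => (a / 2) * (deriv V x * deriv V x))
        (g := fun x => (δ ^ 2 / (2 * a)) * (V x * V x))
        ((continuous_const.mul (hV'cont.mul hV'cont)).intervalIntegrable 0 1)
        ((continuous_const.mul (hVcont.mul hVcont)).intervalIntegrable 0 1),
        intervalIntegral.integral_const_mul, intervalIntegral.integral_const_mul]
    linarith [hmono, hsplit.le, hsplit.ge]
  -- relate δ/2 V(1)^2 to the integral
  have hδV1 : (δ / 2) * (V 1 * V 1) = ∫ x in (0:ℝ)..1, δ * (V x * deriv V x) := by
    rw [← hFTC, ← intervalIntegral.integral_const_mul]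
    congr 1; funext x; ring
  -- β bound
  have hI3bound : I3 ≤ M * I1 := by
    by_cases hint : IntervalIntegrable (fun x => β x * V x * V x) volume 0 1
    · have : I3 ≤ ∫ x in (0:ℝ)..1, M * (V x * V x) := by
        apply intervalIntegral.integral_mono_on (by norm_num) hint
          ((continuous_const.mul (hVcont.mul hVcont)).intervalIntegrable 0 1)
        intro x hx
        have h1 := hβ x hx
        have h2 : 0 ≤ V x * V x := mul_self_nonneg _
        have : β x * (V x * V x) ≤ M * (V x * V x) :=
          mul_le_mul_of_nonneg_right (le_trans (le_abs_self _) h1) h2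
        show β x * V x * V x ≤ M * (V x * V x)
        linarith [this, (mul_assoc (β x) (V x) (V x))]
      rwa [intervalIntegral.integral_const_mul] at this
    · rw [hI3def, intervalIntegral.integral_undef hint]
      positivity
  -- ε term nonpositive
  have hεterm : (ε / k) * (V 1 * V 1) ≤ 0 :=
    mul_nonpos_of_nonpos_of_nonneg (div_nonpos_of_nonpos_of_nonneg hε hk.le) (mul_self_nonneg _)
  -- combine
  have hmain : (1 / k) * I1 ≤ (δ ^ 2 / (2 * a) + M / 2) * I1 := by
    have h1 : (ε / k + δ / 2) * V 1 * V 1 = (ε / k) * (V 1 * V 1) + (δ / 2) * (V 1 * V 1) := by ring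
    rw [h1, hδV1] at hE
    nlinarith [hδbound, hI3bound, hεterm]
  -- conclude I1 = 0
  have hI1zero : I1 = 0 := by
    rcases lt_or_eq_of_le hI1nn with hpos | hzero
    · exfalso
      have h2a : 0 < 2 * a := by positivity
      have hc : (1 / k) ≤ δ ^ 2 / (2 * a) + M / 2 := by
        by_contra hcon
        push_neg at hcon
        nlinarith [mul_lt_mul_of_pos_right hcon hpos]
      rw [div_le_iff₀ hk] at hc
      have hd : δ ^ 2 / (2 * a) = (δ ^ 2 / a) / 2 := by
        rw [div_div]; ring_nf
      rw [hd] at hc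
      have hrw2 : ((δ ^ 2 / a) / 2 + M / 2) * k = k * (M + δ ^ 2 / a) / 2 := by ring
      rw [hrw2] at hc
      linarith
    · exact hzero.symm
  -- V*V = 0 a.e. on Ioc 0 1, hence everywhere by continuity
  have hae : (fun x => V x * V x) =ᵐ[volume.restrict (Ioc (0:ℝ) 1)] 0 := by
    have := (intervalIntegral.integral_eq_zero_iff_of_le_of_nonneg_ae (μ := volume)
      (f := fun x => V x * V x) (a := 0) (b := 1) (by norm_num)
      (Filter.Eventually.of_forall fun x => mul_self_nonneg _)
      ((hVcont.mul hVcont).intervalIntegrable 0 1)).mp hI1zero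
    exact this
  have heqon : EqOn (fun x => V x * V x) 0 (Ioc (0:ℝ) 1) :=
    Measure.eqOn_Ioc_of_ae_eq volume hae (hVcont.mul hVcont).continuousOn
      continuousOn_const
  intro x hx
  rcases eq_or_lt_of_le hx.1 with h0 | h0
  · rw [← h0]; exact hV0
  · have := heqon ⟨h0, hx.2⟩
    simp only [Pi.zero_apply] at this
    exact mul_self_eq_zero.mp this
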